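/- Let n ≥ 1 and let S be an n×n complex symmetric matrix (Sᵀ = S) all of whose leading principal minors are nonzero. Then there exists a lower triangular n×n complex matrix U such that Uᵀ U = S⁻¹ (equivalently, U⁻¹ (Uᵀ)⁻¹ = S). -/

import Mathlib

open Matrix

private lemma chol : ∀ (n : ℕ) (S : Matrix (Fin n) (Fin n) ℂ), Sᵀ = S →
    (∀ (k : ℕ) (hk : k ≤ n), 1 ≤ k →
      (S.submatrix (Fin.castLE hk) (Fin.castLE hk)).det ≠ 0) →
    ∃ L : Matrix (Fin n) (Fin n) ℂ,
      (∀ i j : Fin n, i < j → L i j = 0) ∧ L.det ≠ 0 ∧ L * Lᵀ = S := by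
  intro n
  induction n with
  | zero =>
    intro S _ _
    refine ⟨1, fun i => i.elim0, ?_, Subsingleton.elim _ _⟩
    simp
  | succ n ih =>
    intro S hsymm hminors
    set A : Matrix (Fin n) (Fin n) ℂ := S.submatrix Fin.castSucc Fin.castSucc with hA
    have hAsymm : Aᵀ = A := by
      ext i j
      simp only [hA, transpose_apply, submatrix_apply]
      conv_lhs => rw [← hsymm]
      rfl
    have hAminors : ∀ (k : ℕ) (hk : k ≤ n), 1 ≤ k →
        (A.submatrix (Fin.castLE hk) (Fin.castLE hk)).det ≠ 0 := by
      intro k hk h1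
      have hk' : k ≤ n + 1 := hk.trans (Nat.le_succ n)
      have heq : A.submatrix (Fin.castLE hk) (Fin.castLE hk)
          = S.submatrix (Fin.castLE hk') (Fin.castLE hk') := by
        ext i j; rfl
      rw [heq]
      exact hminors k hk' h1
    obtain ⟨L', hL'low, hL'det, hL'mul⟩ := ih A hAsymm hAminors
    have hdetS : S.det ≠ 0 := by
      have h := hminors (n + 1) le_rfl (Nat.succ_le_succ (Nat.zero_le n))
      have hid : S.submatrix (Fin.castLE (le_refl (n+1))) (Fin.castLE (le_refl (n+1))) = S := by
        ext i j; rfl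
      rwa [hid] at h
    set b : Fin n → ℂ := fun i => S i.castSucc (Fin.last n) with hb
    set w : Fin n → ℂ := L'⁻¹ *ᵥ b with hw
    obtain ⟨α, hα⟩ := IsAlgClosed.exists_pow_nat_eq (k := ℂ)
      (S (Fin.last n) (Fin.last n) - w ⬝ᵥ w) (n := 2) two_pos
    set D : Matrix (Fin 1) (Fin 1) ℂ := Matrix.of fun _ _ => α with hD
    set M : Matrix (Fin n ⊕ Fin 1) (Fin n ⊕ Fin 1) ℂ :=
      fromBlocks L' 0 (Matrix.replicateRow (Fin 1) w) D with hM
    set e : Fin n ⊕ Fin 1 ≃ Fin (n + 1) := finSumFinEquiv with he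
    set L : Matrix (Fin (n+1)) (Fin (n+1)) ℂ := M.submatrix e.symm e.symm with hL
    have hL'inv : L' * L'⁻¹ = 1 := mul_nonsing_inv L' (isUnit_iff_ne_zero.mpr hL'det)
    have hL'w : L' *ᵥ w = b := by
      rw [hw, mulVec_mulVec, hL'inv, one_mulVec]
    -- the key block computation
    have h11 : L' * L'ᵀ + (0 : Matrix (Fin n) (Fin 1) ℂ) * (0 : Matrix (Fin n) (Fin 1) ℂ)ᵀ
        = A := by
      rw [Matrix.zero_mul, add_zero, hL'mul]
    have h12 : L' * (Matrix.replicateRow (Fin 1) w)ᵀ + (0 : Matrix (Fin n) (Fin 1) ℂ) * Dᵀ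
        = Matrix.replicateCol (Fin 1) b := by
      rw [Matrix.zero_mul, add_zero, Matrix.transpose_replicateRow, ← Matrix.replicateCol_mulVec, hL'w]
    have h21 : Matrix.replicateRow (Fin 1) w * L'ᵀ + D * (0 : Matrix (Fin n) (Fin 1) ℂ)ᵀ
        = Matrix.replicateRow (Fin 1) b := by
      rw [Matrix.transpose_zero, Matrix.mul_zero, add_zero, ← Matrix.replicateRow_vecMul,
        Matrix.vecMul_transpose, hL'w]
    have h22 : Matrix.replicateRow (Fin 1) w * (Matrix.replicateRow (Fin 1) w)ᵀ + D * Dᵀ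
        = Matrix.of (fun _ _ : Fin 1 => S (Fin.last n) (Fin.last n)) := by
      ext i j
      have hent : (Matrix.replicateRow (Fin 1) w * (Matrix.replicateRow (Fin 1) w)ᵀ + D * Dᵀ) i j
          = w ⬝ᵥ w + α * α := by
        simp [Matrix.mul_apply, dotProduct, hD]
      rw [hent]
      show w ⬝ᵥ w + α * α = S (Fin.last n) (Fin.last n)
      linear_combination hα
    have key : M * Mᵀ = Matrix.of fun x y => S (e x) (e y) := by
      rw [hM, fromBlocks_transpose, fromBlocks_multiply, h11, h12, h21, h22]
      ext x y
      rcases x with x | x <;> rcases y with y | y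
      · simp only [fromBlocks_apply₁₁, of_apply]
        have h1 : e (Sum.inl x) = Fin.castSucc x := by
          apply Fin.ext; simp [he]
        have h2 : e (Sum.inl y) = Fin.castSucc y := by
          apply Fin.ext; simp [he]
        rw [h1, h2]; rfl
      · simp only [fromBlocks_apply₁₂, of_apply]
        have h1 : e (Sum.inl x) = Fin.castSucc x := by
          apply Fin.ext; simp [he]
        have h2 : e (Sum.inr y) = Fin.last n := by
          apply Fin.ext; simp [he]
        rw [h1, h2]; rfl
      · simp only [fromBlocks_apply₂₁, of_apply]
        have h1 : e (Sum.inr x) = Fin.last n := by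
          apply Fin.ext; simp [he]
        have h2 : e (Sum.inl y) = Fin.castSucc y := by
          apply Fin.ext; simp [he]
        rw [h1, h2]
        show b y = S (Fin.last n) (Fin.castSucc y)
        conv_rhs => rw [← hsymm]
        rfl
      · simp only [fromBlocks_apply₂₂, of_apply]
        have h1 : e (Sum.inr x) = Fin.last n := by
          apply Fin.ext; simp [he]
        have h2 : e (Sum.inr y) = Fin.last n := by
          apply Fin.ext; simp [he]
        rw [h1, h2]
    have hLmul : L * Lᵀ = S := by
      rw [hL, transpose_submatrix, submatrix_mul_equiv, key]
      ext i j
      simp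
    have hdetL : L.det ≠ 0 := by
      intro h0
      apply hdetS
      rw [← hLmul, det_mul, det_transpose, h0, mul_zero]
    refine ⟨L, ?_, hdetL, hLmul⟩
    intro i j hij
    have hi' := (Equiv.apply_symm_apply e i).symm
    have hj' := (Equiv.apply_symm_apply e j).symm
    rcases hx : e.symm i with x | x <;> rcases hy : e.symm j with y | y <;>
      rw [hx] at hi' <;> rw [hy] at hj'
    · have hxy : x < y := by
        rw [hi', hj'] at hij
        have hv1 : ((e (Sum.inl x)) : ℕ) = (x : ℕ) := by simp [he]
        have hv2 : ((e (Sum.inl y)) : ℕ) = (y : ℕ) := by simp [he]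
        have hlt := Fin.lt_def.mp hij
        rw [Fin.lt_def]
        omega
      have hLM : L i j = M (Sum.inl x) (Sum.inl y) := by
        rw [hL, submatrix_apply, hx, hy]
      rw [hLM, hM, fromBlocks_apply₁₁]
      exact hL'low x y hxy
    · have hLM : L i j = M (Sum.inl x) (Sum.inr y) := by
        rw [hL, submatrix_apply, hx, hy]
      rw [hLM, hM, fromBlocks_apply₁₂]
      rfl
    · exfalso
      rw [hi', hj'] at hij
      have h1 : (e (Sum.inr x) : ℕ) = n + (x : ℕ) := by simp [he]
      have h2 : (e (Sum.inl y) : ℕ) = (y : ℕ) := by simp [he]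
      have := Fin.lt_def.mp hij
      have hy' := y.isLt
      omega
    · exfalso
      rw [hi', hj'] at hij
      have h1 : (e (Sum.inr x) : ℕ) = n + (x : ℕ) := by simp [he]
      have h2 : (e (Sum.inr y) : ℕ) = n + (y : ℕ) := by simp [he]
      have := Fin.lt_def.mp hij
      have hx' := x.isLt
      have hy' := y.isLt
      omega

/-- Toeplitz (1907): a complex symmetric matrix with all leading principal minors
nonzero admits a lower triangular `U` with `Uᵀ * U = S⁻¹`. -/
theorem toeplitz_decomposition (n : ℕ) (hn : 1 ≤ n)
    (S : Matrix (Fin n) (Fin n) ℂ) (hsymm : Sᵀ = S)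
    (hminors : ∀ (k : ℕ) (hk : k ≤ n), 1 ≤ k →
      (S.submatrix (Fin.castLE hk) (Fin.castLE hk)).det ≠ 0) :
    ∃ U : Matrix (Fin n) (Fin n) ℂ,
      (∀ i j : Fin n, i < j → U i j = 0) ∧ Uᵀ * U = S⁻¹ := by
  obtain ⟨L, hLlow, hLdet, hLmul⟩ := chol n S hsymm hminors
  have hunit : IsUnit L.det := isUnit_iff_ne_zero.mpr hLdet
  haveI : Invertible L := L.invertibleOfIsUnitDet hunit
  haveI : Invertible Lᵀ := L.transpose.invertibleOfIsUnitDet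
    (by rw [det_transpose]; exact hunit)
  refine ⟨L⁻¹, ?_, ?_⟩
  · -- L⁻¹ is lower triangular
    have hBT : Lᵀ.BlockTriangular id := by
      intro i j hij
      exact hLlow j i hij
    have hBTinv : (Lᵀ)⁻¹.BlockTriangular id :=
      blockTriangular_inv_of_blockTriangular hBT
    intro i j hij
    have := hBTinv (i := j) (j := i) hij
    rw [← transpose_nonsing_inv] at this
    simpa using this
  · rw [transpose_nonsing_inv, ← Matrix.mul_inv_rev, hLmul]
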